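/- For all real x > 0, (1 + 1/x)^x < e (1 - 1/(2(x+1))). -/

import Mathlib

open Real Set

noncomputable def gfun : ℝ → ℝ :=
  fun u => u + u * (Real.log (2 + u) - Real.log (2 + 2 * u)) - Real.log (1 + u)

lemma gfun_hasDeriv {u : ℝ} (hu : 0 ≤ u) :
    HasDerivAt gfun
      (1 + (1 * (Real.log (2 + u) - Real.log (2 + 2 * u)) +
        u * (1 / (2 + u) - 2 / (2 + 2 * u))) - 1 / (1 + u)) u := by
  have h2u : (2 : ℝ) + u ≠ 0 := by linarith
  have h22u : (2 : ℝ) + 2 * u ≠ 0 := by linarith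
  have h1u : (1 : ℝ) + u ≠ 0 := by linarith
  have hA : HasDerivAt (fun u : ℝ => 2 + u) 1 u := (hasDerivAt_id u).const_add 2
  have hB : HasDerivAt (fun u : ℝ => 2 + 2 * u) 2 u := by
    have := ((hasDerivAt_id u).const_mul 2).const_add 2
    simpa using this
  have hA' := hA.log h2u
  have hB' := hB.log h22u
  have hC : HasDerivAt (fun u : ℝ => 1 + u) 1 u := (hasDerivAt_id u).const_add 1
  have hC' := hC.log h1u
  have hprod := (hasDerivAt_id u).mul (hA'.sub hB')
  have := ((hasDerivAt_id u).add hprod).sub hC'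
  exact this

lemma gfun_pos {u : ℝ} (hu : 0 < u) : 0 < gfun u := by
  have key : StrictMonoOn gfun (Ici (0 : ℝ)) := by
    apply strictMonoOn_of_deriv_pos (convex_Ici 0)
    · intro v hv
      exact ((gfun_hasDeriv hv).continuousAt).continuousWithinAt
    · intro v hv
      rw [interior_Ici] at hv
      have hv0 : 0 < v := hv
      have h2v : (0:ℝ) < 2 + v := by linarith
      have h22v : (0:ℝ) < 2 + 2 * v := by linarith
      have h1v : (0:ℝ) < 1 + v := by linarith
      have hd := gfun_hasDeriv hv0.le
      rw [hd.deriv]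
      have hlog : Real.log ((2 + 2 * v) / (2 + v)) < (2 + 2 * v) / (2 + v) - 1 :=
        Real.log_lt_sub_one_of_pos (by positivity)
          (ne_of_gt ((one_lt_div h2v).mpr (by linarith)))
      rw [Real.log_div (by linarith) (by linarith)] at hlog
      have hineq : (2 + 2 * v) / (2 + v) - 1 = v / (2 + v) := by field_simp; ring
      rw [hineq] at hlog
      have heq : 1 + (1 * (Real.log (2 + v) - Real.log (2 + 2 * v)) +
          v * (1 / (2 + v) - 2 / (2 + 2 * v))) - 1 / (1 + v)
          = v / (2 + v) - (Real.log (2 + 2 * v) - Real.log (2 + v)) := by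
        have e1 : v * (1 / (2 + v) - 2 / (2 + 2 * v)) = v / (2 + v) - v / (1 + v) := by
          field_simp
        have e2 : (1:ℝ) - v / (1 + v) - 1 / (1 + v) = 0 := by field_simp; ring
        rw [e1]
        linarith [e2]
      rw [heq]
      linarith
  have h0 : gfun 0 = 0 := by simp [gfun]
  have := key self_mem_Ici (mem_Ici.mpr hu.le) hu
  rwa [h0] at this

theorem stmt_18 (x : ℝ) (hx : 0 < x) :
    (1 + 1/x) ^ x < Real.exp 1 * (1 - 1/(2*(x + 1))) := by
  have hx1 : (0:ℝ) < x + 1 := by linarith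
  have hu : (0:ℝ) < 1 / x := by positivity
  have hg := gfun_pos hu
  unfold gfun at hg
  have h1 : (1:ℝ) + 1 / x = (x + 1) / x := by field_simp
  have h2 : (2:ℝ) + 1 / x = (2 * x + 1) / x := by field_simp
  have h3 : (2:ℝ) + 2 * (1 / x) = (2 * x + 2) / x := by field_simp
  rw [h1, h2, h3, Real.log_div (by linarith) hx.ne', Real.log_div (by positivity) hx.ne',
    Real.log_div (by positivity) hx.ne'] at hg
  have keyeq : 1/x + 1/x * (Real.log (2*x+1) - Real.log x - (Real.log (2*x+2) - Real.log x))
      - (Real.log (x+1) - Real.log x)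
      = (1 + (Real.log (2*x+1) - Real.log (2*x+2)) - x * (Real.log (x+1) - Real.log x)) / x := by
    field_simp
    ring
  rw [keyeq] at hg
  have hN : 0 < 1 + (Real.log (2*x+1) - Real.log (2*x+2)) - x * (Real.log (x+1) - Real.log x) := by
    have := (lt_div_iff₀ hx).mp hg
    linarith [this]
  have hmain : x * Real.log ((x + 1) / x) < 1 + Real.log ((2 * x + 1) / (2 * x + 2)) := by
    rw [show Real.log ((x+1)/x) = Real.log (x+1) - Real.log x from
        Real.log_div (by linarith) hx.ne',
      show Real.log ((2*x+1)/(2*x+2)) = Real.log (2*x+1) - Real.log (2*x+2) from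
        Real.log_div (by linarith) (by linarith)]
    linarith
  have hbase : (0:ℝ) < 1 + 1 / x := by positivity
  rw [← h1] at hmain
  have hq : (0:ℝ) < (2 * x + 1) / (2 * x + 2) := by positivity
  have hrhs : Real.exp 1 * (1 - 1 / (2 * (x + 1)))
      = Real.exp (1 + Real.log ((2 * x + 1) / (2 * x + 2))) := by
    rw [Real.exp_add, Real.exp_log hq]
    congr 1
    field_simp
    ring
  rw [hrhs, Real.rpow_def_of_pos hbase]
  exact Real.exp_lt_exp.mpr (by rwa [mul_comm] at hmain)
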